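/- For every r ∈ ℕ, there exists an edge-colouring of the countably infinite complete graph on ℕ with r+1 colours such that ℕ cannot be covered by the vertex sets of r monochromatic paths (finite or infinite). -/

import Mathlib

/-- A monochromatic (possibly empty, single-vertex, finite, or one-way infinite)
path of colour `c` in the complete graph on `ℕ` edge-coloured by `φ`. -/
def IsMonoPath {r : ℕ} (φ : Sym2 ℕ → Fin r) (c : Fin r) (X : Set ℕ) : Prop :=
  X = ∅ ∨
  ∃ (N : ℕ∞) (v : ℕ → ℕ),
    1 ≤ N ∧
    (∀ i j : ℕ, (i : ℕ∞) < N → (j : ℕ∞) < N → v i = v j → i = j) ∧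
    X = {x | ∃ i : ℕ, (i : ℕ∞) < N ∧ v i = x} ∧
    ∀ i : ℕ, ((i + 1 : ℕ) : ℕ∞) < N → φ s(v i, v (i + 1)) = c

/-- There is an `(r+1)`-edge-colouring of the complete graph on `ℕ` such that
`ℕ` cannot be covered by the vertex sets of `r` monochromatic paths. -/
theorem rado_lower_bound (r : ℕ) :
    ∃ φ : Sym2 ℕ → Fin (r + 1),
      ¬ ∃ (X : Fin r → Set ℕ) (c : Fin r → Fin (r + 1)),
        (∀ i : Fin r, IsMonoPath φ (c i) (X i)) ∧ (⋃ i, X i) = Set.univ := by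
  classical
  set b : ℕ := 2 * r + 2 with hbdef
  have hb2 : 1 < b := by omega
  set g : ℕ → ℕ := fun x => min r (Nat.log b (x + 1)) with hgdef
  have hgle : ∀ x, g x ≤ r := fun x => min_le_left _ _
  refine ⟨Sym2.lift ⟨fun x y => ⟨min (g x) (g y),
      lt_of_le_of_lt (le_trans (min_le_left _ _) (hgle x)) (Nat.lt_succ_self r)⟩,
      fun x y => by simp [Fin.ext_iff, min_comm]⟩, ?_⟩
  rintro ⟨X, c, hmono, hcover⟩
  set φ : Sym2 ℕ → Fin (r + 1) := Sym2.lift ⟨fun x y => ⟨min (g x) (g y),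
      lt_of_le_of_lt (le_trans (min_le_left _ _) (hgle x)) (Nat.lt_succ_self r)⟩,
      fun x y => by simp [Fin.ext_iff, min_comm]⟩ with hφdef
  have hφ : ∀ x y : ℕ, (φ s(x, y)).val = min (g x) (g y) := fun x y => rfl
  -- there is a missing colour m
  have hnsurj : ¬ Function.Surjective c := by
    intro h
    have := Fintype.card_le_of_surjective c h
    simp at this
  obtain ⟨m, hm⟩ : ∃ m : Fin (r + 1), ∀ i, c i ≠ m := by
    by_contra h
    push_neg at h
    exact hnsurj fun y => by obtain ⟨i, hi⟩ := h y; exact ⟨i, hi⟩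
  set A : Set ℕ := {x | g x = m.val} with hAdef
  have hmle : m.val ≤ r := Nat.lt_succ_iff.mp m.isLt
  -- per-path lemma
  have key : ∀ i : Fin r, (X i ∩ A).Finite ∧ (X i ∩ A).ncard ≤ 2 * b ^ m.val := by
    intro i
    have hc : (c i).val ≠ m.val := fun h => hm i (Fin.val_injective h)
    have hbm : 1 ≤ b ^ m.val := Nat.one_le_pow _ _ (by omega)
    rcases hmono i with hE | ⟨N, v, hN1, hinj, hX, hcol⟩
    · simp [hE]
    · set P : ℕ → Prop := fun k => (k : ℕ∞) < N with hPdef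
      have hPmono : ∀ {a a' : ℕ}, a ≤ a' → P a' → P a := by
        intro a a' h h'
        exact lt_of_le_of_lt (by exact_mod_cast h) h'
      have hXA : X i ∩ A = v '' {k | P k ∧ g (v k) = m.val} := by
        rw [hX]
        ext x
        constructor
        · rintro ⟨⟨k, hk, rfl⟩, hgx⟩
          exact ⟨k, ⟨hk, hgx⟩, rfl⟩
        · rintro ⟨k, ⟨hk, hgk⟩, rfl⟩
          exact ⟨⟨k, hk, rfl⟩, hgk⟩
      by_cases hP1 : P 1
      · -- at least two vertices: each m-vertex has a neighbour of smaller colour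
        have claim : ∀ k, P k → g (v k) = m.val →
            ∃ j, (P j ∧ g (v j) < m.val) ∧ (j = k + 1 ∨ k = j + 1) := by
          intro k hk hgk
          by_cases hk1 : P (k + 1)
          · have h2 : min (g (v k)) (g (v (k + 1))) = (c i).val := by
              rw [← hφ]; exact congrArg Fin.val (hcol k hk1)
            exact ⟨k + 1, ⟨hk1, by omega⟩, Or.inl rfl⟩
          · obtain ⟨j, rfl⟩ : ∃ j, k = j + 1 := by
              rcases k with _ | j
              · exact absurd hP1 hk1
              · exact ⟨j, rfl⟩
            have h2 : min (g (v j)) (g (v (j + 1))) = (c i).val := by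
              rw [← hφ]; exact congrArg Fin.val (hcol j hk)
            exact ⟨j, ⟨hPmono (Nat.le_succ j) hk, by omega⟩, Or.inr rfl⟩
        set U : Set ℕ := {j | P j ∧ g (v j) < m.val} with hUdef
        have hUim : v '' U ⊆ Set.Iio (b ^ m.val) := by
          rintro x ⟨j, ⟨hPj, hgj⟩, rfl⟩
          have hgr : g (v j) < r := lt_of_lt_of_le hgj hmle
          have hlog : Nat.log b (v j + 1) = g (v j) := by
            simp only [hgdef] at hgr ⊢
            omega
          have := Nat.lt_pow_succ_log_self hb2 (v j + 1)
          rw [hlog, Nat.succ_eq_add_one] at this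
          have hple : b ^ (g (v j) + 1) ≤ b ^ m.val :=
            Nat.pow_le_pow_right (by omega) (by omega)
          simp only [Set.mem_Iio]
          omega
        have hinjU : Set.InjOn v U := fun a ha a' ha' h => hinj a a' ha.1 ha'.1 h
        have hUfin : U.Finite :=
          Set.Finite.of_finite_image ((Set.finite_Iio _).subset hUim) hinjU
        have hUcard : U.ncard ≤ b ^ m.val := by
          have h1 : (v '' U).ncard ≤ (Set.Iio (b ^ m.val)).ncard :=
            Set.ncard_le_ncard hUim (Set.finite_Iio _)
          rw [Set.ncard_image_of_injOn hinjU] at h1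
          rwa [← Finset.coe_range, Set.ncard_coe_finset, Finset.card_range] at h1
        have hTsub : {k | P k ∧ g (v k) = m.val} ⊆
            (fun j => j + 1) '' U ∪ (fun j => j - 1) '' U := by
          rintro k ⟨hk, hgk⟩
          obtain ⟨j, hj, hjk | hjk⟩ := claim k hk hgk
          · exact Or.inr ⟨j, hj, show j - 1 = k by omega⟩
          · exact Or.inl ⟨j, hj, show j + 1 = k by omega⟩
        have hT1fin : ((fun j => j + 1) '' U ∪ (fun j => j - 1) '' U).Finite :=
          (hUfin.image _).union (hUfin.image _)
        have hTfin : {k | P k ∧ g (v k) = m.val}.Finite := hT1fin.subset hTsub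
        have hTcard : {k | P k ∧ g (v k) = m.val}.ncard ≤ 2 * b ^ m.val := by
          calc {k | P k ∧ g (v k) = m.val}.ncard
              ≤ ((fun j => j + 1) '' U ∪ (fun j => j - 1) '' U).ncard :=
                Set.ncard_le_ncard hTsub hT1fin
            _ ≤ ((fun j => j + 1) '' U).ncard + ((fun j => j - 1) '' U).ncard :=
                Set.ncard_union_le _ _
            _ ≤ U.ncard + U.ncard :=
                Nat.add_le_add (Set.ncard_image_le hUfin) (Set.ncard_image_le hUfin)
            _ ≤ 2 * b ^ m.val := by omega
        refine ⟨by rw [hXA]; exact hTfin.image _, ?_⟩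
        rw [hXA]
        exact le_trans (Set.ncard_image_le hTfin) hTcard
      · -- single vertex path
        have hsub : X i ∩ A ⊆ {v 0} := by
          rw [hXA]
          rintro x ⟨k, ⟨hk, _⟩, rfl⟩
          have hk0 : k = 0 := by
            by_contra h
            exact hP1 (hPmono (by omega) hk)
          simp [hk0]
        refine ⟨(Set.finite_singleton _).subset hsub, ?_⟩
        have := Set.ncard_le_ncard hsub (Set.finite_singleton _)
        simp only [Set.ncard_singleton] at this
        omega
  -- the missing colour class is contained in the union of the traces
  have hcov2 : A ⊆ ⋃ i, (X i ∩ A) := by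
    intro x hx
    have hx' : x ∈ ⋃ i, X i := hcover ▸ Set.mem_univ x
    obtain ⟨i, hi⟩ := Set.mem_iUnion.mp hx'
    exact Set.mem_iUnion.mpr ⟨i, hi, hx⟩
  have hAfin : (⋃ i, (X i ∩ A)).Finite := Set.finite_iUnion fun i => (key i).1
  rcases Nat.lt_or_ge m.val r with hmr | hmr
  · -- m < r : counting contradiction
    set F : Fin r → Finset ℕ := fun i => (key i).1.toFinset with hFdef
    have hIco : Finset.Ico (b ^ m.val - 1) (b ^ (m.val + 1) - 1) ⊆
        Finset.univ.biUnion F := by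
      intro x hx
      simp only [Finset.mem_Ico] at hx
      have hxA : x ∈ A := by
        have hp1 : 1 ≤ b ^ m.val := Nat.one_le_pow _ _ (by omega)
        have hlog : Nat.log b (x + 1) = m.val :=
          Nat.log_eq_of_pow_le_of_lt_pow (by omega) (by omega)
        simp only [hAdef, Set.mem_setOf_eq, hgdef]
        omega
      obtain ⟨i, hi⟩ := Set.mem_iUnion.mp (hcov2 hxA)
      exact Finset.mem_biUnion.mpr ⟨i, Finset.mem_univ i, (key i).1.mem_toFinset.mpr hi⟩
    have hcard1 : (Finset.Ico (b ^ m.val - 1) (b ^ (m.val + 1) - 1)).card ≤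
        ∑ i : Fin r, (F i).card :=
      le_trans (Finset.card_le_card hIco) Finset.card_biUnion_le
    have hcard2 : ∑ i : Fin r, (F i).card ≤ r * (2 * b ^ m.val) := by
      calc ∑ i : Fin r, (F i).card ≤ ∑ _i : Fin r, 2 * b ^ m.val := by
            refine Finset.sum_le_sum fun i _ => ?_
            have h2 := (key i).2
            rwa [Set.ncard_eq_toFinset_card _ (key i).1] at h2
        _ = r * (2 * b ^ m.val) := by
            rw [Finset.sum_const, Finset.card_univ, Fintype.card_fin, smul_eq_mul]
    rw [Nat.card_Ico] at hcard1
    have hp1 : 1 ≤ b ^ m.val := Nat.one_le_pow _ _ (by omega)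
    have hE : b ^ (m.val + 1) = 2 * (r * b ^ m.val) + 2 * b ^ m.val := by
      rw [pow_succ, hbdef]; ring
    have hEt : b ^ m.val ≤ b ^ (m.val + 1) :=
      Nat.pow_le_pow_right (by omega) (by omega)
    have h4 : b ^ (m.val + 1) ≤ ∑ i : Fin r, (F i).card + b ^ m.val := by omega
    have hcard2' : ∑ i : Fin r, (F i).card ≤ 2 * (r * b ^ m.val) := by
      have : r * (2 * b ^ m.val) = 2 * (r * b ^ m.val) := by ring
      omega
    omega
  · -- m = r : the class A is infinite, but covered by a finite set
    have hinf : A.Infinite := by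
      apply Set.Infinite.mono (s := Set.Ici (b ^ r - 1)) ?_ (Set.Ici_infinite _)
      intro x hx
      have hx' : b ^ r ≤ x + 1 := by
        have hp1 : 1 ≤ b ^ r := Nat.one_le_pow _ _ (by omega)
        simp only [Set.mem_Ici] at hx
        omega
      have hlog : r ≤ Nat.log b (x + 1) := (Nat.le_log_iff_pow_le hb2 (by omega)).mpr hx'
      have hmr' : m.val = r := le_antisymm hmle hmr
      simp only [hAdef, Set.mem_setOf_eq, hgdef, hmr']
      omega
    exact hinf (hAfin.subset hcov2)
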